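/- Let ℓ₁, k₁, k be integers with 0 ≤ ℓ₁ ≤ k₁ < k, and let n = ∏_{j=1}^{k} p_j^{a_j} where the p_j are pairwise distinct primes, the a_j are positive integers, and p_{k₁+1} < p_{k₁+2} < ⋯ < p_k. Let t_min and t_max be positive real numbers with t_min ≤ σ₋₁(n) ≤ t_max, and set m = t_min / ((∏_{j=1}^{ℓ₁} σ₋₁(p_j^{a_j})) · (∏_{j=ℓ₁+1}^{k₁} p_j/(p_j − 1))). Suppose k₁ + 2 ≤ k, a_{k₁+1} ≥ 2, and A is a real number with 1 < A ≤ p_{k₁+1} and m(A − 1)/A > 1. Then p_{k₁+2} < 1 + (k − k₁ − 1)/(m(A − 1)/A − 1). -/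

import Mathlib

open ArithmeticFunction Finset
open scoped ArithmeticFunction.sigma

lemma aux_ratio_ge_one {p a : ℕ} (hp : p.Prime) :
    (1:ℝ) ≤ (σ 1 (p ^ a) : ℝ) / ((p ^ a : ℕ) : ℝ) := by
  have hp0 : (0:ℝ) < ((p ^ a : ℕ) : ℝ) := by
    exact_mod_cast pow_pos hp.pos a
  rw [le_div_iff₀ hp0, one_mul]
  exact_mod_cast ArithmeticFunction.sigma_one_apply (p ^ a) ▸
    Finset.single_le_sum (f := fun d => d) (fun i _ => Nat.zero_le _)
      (Nat.mem_divisors_self _ (pow_ne_zero a hp.ne_zero))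

lemma aux_ratio_lt {p a : ℕ} (hp : p.Prime) :
    (σ 1 (p ^ a) : ℝ) / ((p ^ a : ℕ) : ℝ) < (p : ℝ) / ((p : ℝ) - 1) := by
  have hp1 : (1:ℝ) < (p:ℝ) := by exact_mod_cast hp.one_lt
  have hpa : (0:ℝ) < ((p ^ a : ℕ) : ℝ) := by
    exact_mod_cast pow_pos hp.pos a
  have hs : (σ 1 (p ^ a) : ℝ) = ∑ i ∈ range (a+1), (p:ℝ)^i := by
    rw [sigma_one_apply_prime_pow hp]; push_cast; ring_nf
  rw [hs, div_lt_div_iff₀ hpa (by linarith)]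
  have := geom_sum_mul (p:ℝ) (a+1)
  push_cast
  nlinarith [pow_pos (show (0:ℝ) < p by linarith) (a+1), this, pow_succ (p:ℝ) a]

lemma aux_antitone {x y : ℝ} (hx : 1 < x) (hxy : x ≤ y) :
    y / (y - 1) ≤ x / (x - 1) := by
  rw [div_le_div_iff₀ (by linarith) (by linarith)]
  nlinarith

lemma aux_telescope (q : ℝ) (hq : 1 < q) (K : ℕ) (g : ℕ → ℝ)
    (hg : ∀ i < K, g i ≤ (q + i) / (q + i - 1)) (hgpos : ∀ i < K, 0 < g i) :
    ∏ i ∈ range K, g i ≤ (q + K - 1) / (q - 1) := by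
  induction K with
  | zero => simp [div_self (by linarith : q - 1 ≠ 0)]
  | succ K ih =>
    rw [prod_range_succ]
    have h1 : ∏ i ∈ range K, g i ≤ (q + K - 1) / (q - 1) :=
      ih (fun i hi => hg i (by omega)) (fun i hi => hgpos i (by omega))
    have hprod : 0 ≤ ∏ i ∈ range K, g i :=
      prod_nonneg fun i hi => (hgpos i (by simp at hi; omega)).le
    have h2 : g K ≤ (q + K) / (q + K - 1) := hg K (by omega)
    have hK1 : (0:ℝ) < q + K - 1 := by have : (0:ℝ) ≤ K := Nat.cast_nonneg K; linarith
    calc (∏ i ∈ range K, g i) * g K ≤ ((q + K - 1) / (q - 1)) * ((q + K) / (q + K - 1)) := by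
          apply mul_le_mul h1 h2 (hgpos K (by omega)).le
          exact div_nonneg hK1.le (by linarith)
      _ = (q + (K+1:ℕ) - 1) / (q - 1) := by
          have h3 : q - 1 ≠ 0 := by linarith
          have h4 : q + K - 1 ≠ 0 := by linarith
          push_cast
          field_simp
          ring

lemma aux_final (q X Kr : ℝ) (hq : 1 < q) (hX : 1 < X)
    (h : X < (q + Kr - 1) / (q - 1)) : q < 1 + Kr / (X - 1) := by
  have hq1 : (0:ℝ) < q - 1 := by linarith
  have hX1 : (0:ℝ) < X - 1 := by linarith
  have h5 : X * (q - 1) < q + Kr - 1 := (lt_div_iff₀ hq1).mp h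
  have h6 : (q - 1) * (X - 1) < Kr := by nlinarith
  have h7 : q - 1 < Kr / (X - 1) := (lt_div_iff₀ hX1).mpr h6
  linarith

theorem bounds_on_smallest_unknown_prime_d
    (l1 k1 k : ℕ) (hl1k1 : l1 ≤ k1) (hk1k : k1 < k)
    (p a : ℕ → ℕ)
    (hp : ∀ j ∈ Finset.Icc 1 k, (p j).Prime)
    (hdist : ∀ i ∈ Finset.Icc 1 k, ∀ j ∈ Finset.Icc 1 k, i ≠ j → p i ≠ p j)
    (ha : ∀ j ∈ Finset.Icc 1 k, 0 < a j)
    (hsorted : ∀ i j : ℕ, k1 + 1 ≤ i → i < j → j ≤ k → p i < p j)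
    (n : ℕ) (hn : n = ∏ j ∈ Finset.Icc 1 k, p j ^ a j)
    (tmin tmax : ℝ) (htmin : 0 < tmin) (htmax : 0 < tmax)
    (hlow : tmin ≤ (σ 1 n : ℝ) / n) (hhigh : (σ 1 n : ℝ) / n ≤ tmax)
    (m : ℝ)
    (hm : m = tmin /
      ((∏ j ∈ Finset.Icc 1 l1, (σ 1 (p j ^ a j) : ℝ) / (p j ^ a j : ℕ)) *
       (∏ j ∈ Finset.Icc (l1 + 1) k1, (p j : ℝ) / ((p j : ℝ) - 1))))
    (hk2 : k1 + 2 ≤ k) (ha2 : 2 ≤ a (k1 + 1))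
    (A : ℝ) (hA1 : 1 < A) (hA2 : A ≤ (p (k1 + 1) : ℝ))
    (hmA : 1 < m * (A - 1) / A) :
    (p (k1 + 2) : ℝ) < 1 + ((k : ℝ) - (k1 : ℝ) - 1) / (m * (A - 1) / A - 1) := by
  classical
  set r : ℕ → ℝ := fun j => (σ 1 (p j ^ a j) : ℝ) / ((p j ^ a j : ℕ) : ℝ) with hr
  -- basic facts about primes in range
  have hpj : ∀ j, 1 ≤ j → j ≤ k → (p j).Prime := fun j h1 h2 =>
    hp j (Finset.mem_Icc.mpr ⟨h1, h2⟩)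
  have hr1 : ∀ j, 1 ≤ j → j ≤ k → (1:ℝ) ≤ r j := fun j h1 h2 =>
    aux_ratio_ge_one (hpj j h1 h2)
  have hrlt : ∀ j, 1 ≤ j → j ≤ k → r j < (p j : ℝ) / ((p j : ℝ) - 1) := fun j h1 h2 =>
    aux_ratio_lt (hpj j h1 h2)
  have hrpos : ∀ j, 1 ≤ j → j ≤ k → (0:ℝ) < r j := fun j h1 h2 =>
    lt_of_lt_of_le one_pos (hr1 j h1 h2)
  -- multiplicativity
  have hcop : (↑(Finset.Icc 1 k) : Set ℕ).Pairwise (Function.onFun Nat.Coprime fun j => p j ^ a j) := by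
    intro i hi j hj hij
    simp only [Finset.coe_Icc, Set.mem_Icc] at hi hj
    show Nat.Coprime (p i ^ a i) (p j ^ a j)
    exact ((Nat.coprime_primes (hpj i hi.1 hi.2) (hpj j hj.1 hj.2)).mpr
      (hdist i (Finset.mem_Icc.mpr hi) j (Finset.mem_Icc.mpr hj) hij)).pow _ _
  have hsig : (σ 1 n : ℝ) = ∏ j ∈ Finset.Icc 1 k, (σ 1 (p j ^ a j) : ℝ) := by
    rw [hn, isMultiplicative_sigma.map_prod _ _ hcop]
    push_cast; rfl
  have hncast : (n : ℝ) = ∏ j ∈ Finset.Icc 1 k, ((p j ^ a j : ℕ) : ℝ) := by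
    rw [hn]; push_cast; rfl
  have hP : (σ 1 n : ℝ) / n = ∏ j ∈ Finset.Icc 1 k, r j := by
    rw [hsig, hncast, ← Finset.prod_div_distrib]
  -- split the product
  have hsplit : ∏ j ∈ Finset.Icc 1 k, r j =
      ((∏ j ∈ Finset.Icc 1 l1, r j) * (∏ j ∈ Finset.Icc (l1+1) k1, r j)) *
      (r (k1+1) * ∏ j ∈ Finset.Icc (k1+2) k, r j) := by
    have e0 : Finset.Icc 1 k = Finset.Ioc 0 k := Finset.Icc_add_one_left_eq_Ioc _ _
    have e1 : Finset.Icc 1 l1 = Finset.Ioc 0 l1 := Finset.Icc_add_one_left_eq_Ioc _ _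
    have e2 : Finset.Icc (l1+1) k1 = Finset.Ioc l1 k1 := Finset.Icc_add_one_left_eq_Ioc _ _
    have e3 : Finset.Icc (k1+2) k = Finset.Ioc (k1+1) k := Finset.Icc_add_one_left_eq_Ioc _ _
    rw [e0, e1, e2, e3,
      ← Finset.prod_Ioc_consecutive r (Nat.zero_le k1) (le_of_lt hk1k),
      ← Finset.prod_Ioc_consecutive r (Nat.zero_le l1) hl1k1,
      ← Finset.prod_Ioc_consecutive r (Nat.le_succ k1) (by omega : k1+1 ≤ k),
      Nat.Ioc_succ_singleton, Finset.prod_singleton]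
  -- denominator bounds
  set D := (∏ j ∈ Finset.Icc 1 l1, r j) *
      (∏ j ∈ Finset.Icc (l1+1) k1, (p j : ℝ) / ((p j : ℝ) - 1)) with hD
  have hmem1 : ∀ j ∈ Finset.Icc 1 l1, 1 ≤ j ∧ j ≤ k := by
    intro j hj; rw [Finset.mem_Icc] at hj; omega
  have hmem2 : ∀ j ∈ Finset.Icc (l1+1) k1, 1 ≤ j ∧ j ≤ k := by
    intro j hj; rw [Finset.mem_Icc] at hj; omega
  have hP1a_pos : (0:ℝ) < ∏ j ∈ Finset.Icc 1 l1, r j :=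
    Finset.prod_pos fun j hj => hrpos j (hmem1 j hj).1 (hmem1 j hj).2
  have hfrac_pos : ∀ j, 1 ≤ j → j ≤ k → (0:ℝ) < (p j : ℝ) / ((p j : ℝ) - 1) := by
    intro j h1 h2
    have : (2:ℝ) ≤ (p j : ℝ) := by exact_mod_cast (hpj j h1 h2).two_le
    apply div_pos <;> linarith
  have hD_pos : 0 < D := by
    apply mul_pos hP1a_pos
    exact Finset.prod_pos fun j hj => hfrac_pos j (hmem2 j hj).1 (hmem2 j hj).2
  have hP1_le_D : (∏ j ∈ Finset.Icc 1 l1, r j) * (∏ j ∈ Finset.Icc (l1+1) k1, r j) ≤ D := by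
    apply mul_le_mul_of_nonneg_left _ hP1a_pos.le
    apply Finset.prod_le_prod
    · intro j hj; exact (hrpos j (hmem2 j hj).1 (hmem2 j hj).2).le
    · intro j hj; exact (hrlt j (hmem2 j hj).1 (hmem2 j hj).2).le
  -- tail product positivity
  have hmem3 : ∀ j ∈ Finset.Icc (k1+2) k, 1 ≤ j ∧ j ≤ k := by
    intro j hj; rw [Finset.mem_Icc] at hj; omega
  have hPc_pos : (0:ℝ) < r (k1+1) := hrpos (k1+1) (by omega) (by omega)
  have hP2b_pos : (0:ℝ) < ∏ j ∈ Finset.Icc (k1+2) k, r j :=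
    Finset.prod_pos fun j hj => hrpos j (hmem3 j hj).1 (hmem3 j hj).2
  -- m ≤ tail product
  have hm_le : m ≤ r (k1+1) * ∏ j ∈ Finset.Icc (k1+2) k, r j := by
    have h1 : m ≤ (∏ j ∈ Finset.Icc 1 k, r j) / D := by
      rw [hm]
      exact div_le_div_of_nonneg_right (hP ▸ hlow) hD_pos.le
    rw [hsplit] at h1
    refine h1.trans ?_
    rw [div_le_iff₀ hD_pos]
    calc ((∏ j ∈ Finset.Icc 1 l1, r j) * (∏ j ∈ Finset.Icc (l1+1) k1, r j)) *
          (r (k1+1) * ∏ j ∈ Finset.Icc (k1+2) k, r j)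
        = (r (k1+1) * ∏ j ∈ Finset.Icc (k1+2) k, r j) *
          ((∏ j ∈ Finset.Icc 1 l1, r j) * (∏ j ∈ Finset.Icc (l1+1) k1, r j)) := by ring
      _ ≤ (r (k1+1) * ∏ j ∈ Finset.Icc (k1+2) k, r j) * D :=
          mul_le_mul_of_nonneg_left hP1_le_D (mul_pos hPc_pos hP2b_pos).le
  -- the second-smallest unknown prime
  have hq2 : (2:ℝ) ≤ (p (k1+2) : ℝ) := by
    exact_mod_cast (hpj (k1+2) (by omega) (by omega)).two_le
  set q : ℝ := (p (k1+2) : ℝ) with hqdef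
  have hq1 : (1:ℝ) < q := by linarith
  have hPc_lt : r (k1+1) < A / (A - 1) := by
    have h1 := hrlt (k1+1) (by omega) (by omega)
    have h2 : (p (k1+1):ℝ)/((p (k1+1):ℝ)-1) ≤ A/(A-1) := aux_antitone hA1 hA2
    linarith
  have hgrow : ∀ i : ℕ, k1+2+i ≤ k → p (k1+2) + i ≤ p (k1+2+i) := by
    intro i
    induction i with
    | zero => simp
    | succ i ih =>
      intro hik
      have h1 := ih (by omega)
      have h2 := hsorted (k1+2+i) (k1+2+i+1) (by omega) (by omega) (by omega)
      have e : p (k1+2+(i+1)) = p (k1+2+i+1) := rfl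
      omega
  set K := k - (k1+1) with hK
  have htail : ∏ j ∈ Finset.Icc (k1+2) k, r j ≤ (q + K - 1) / (q - 1) := by
    have e : Finset.Icc (k1+2) k = Finset.Ico (k1+2) (k+1) := by
      rw [Finset.Ico_add_one_right_eq_Icc]
    rw [e, Finset.prod_Ico_eq_prod_range]
    have eK : k + 1 - (k1+2) = K := by omega
    rw [eK]
    apply aux_telescope q hq1 K
    · intro i hi
      have hik : k1+2+i ≤ k := by omega
      have h1 := hrlt (k1+2+i) (by omega) hik
      have h2 : q + i ≤ (p (k1+2+i) : ℝ) := by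
        have := hgrow i hik
        rw [hqdef]
        exact_mod_cast this
      have hi1 : (1:ℝ) < q + i := by
        have : (0:ℝ) ≤ i := Nat.cast_nonneg i
        linarith
      exact h1.le.trans (aux_antitone hi1 h2)
    · intro i hi
      exact hrpos (k1+2+i) (by omega) (by omega)
  have hAA : (0:ℝ) < A/(A-1) := div_pos (by linarith) (by linarith)
  have hcomb : m < (A/(A-1)) * ((q + (K:ℝ) - 1)/(q-1)) :=
    lt_of_le_of_lt hm_le (mul_lt_mul hPc_lt htail hP2b_pos hAA.le)
  have hX_lt : m * (A-1)/A < (q + (K:ℝ) - 1)/(q-1) := by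
    have h0 : (0:ℝ) < (A-1)/A := div_pos (by linarith) (by linarith)
    calc m*(A-1)/A = m * ((A-1)/A) := by ring
      _ < ((A/(A-1)) * ((q+(K:ℝ)-1)/(q-1))) * ((A-1)/A) :=
          mul_lt_mul_of_pos_right hcomb h0
      _ = (q+(K:ℝ)-1)/(q-1) := by
          have h3 : A - 1 ≠ 0 := by linarith
          have h4 : A ≠ 0 := by linarith
          have h5 : q - 1 ≠ 0 := by linarith
          field_simp
  have hKcast : ((K:ℕ):ℝ) = (k:ℝ) - (k1:ℝ) - 1 := by
    rw [hK]
    have e : ((k - (k1+1):ℕ):ℝ) = (k:ℝ) - ((k1+1:ℕ):ℝ) := Nat.cast_sub (by omega)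
    rw [e]
    push_cast
    ring
  have := aux_final q (m * (A-1) / A) (K:ℝ) hq1 hmA hX_lt
  rw [hKcast] at this
  exact this
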